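/- Let μ : ℝ → ℝ be a nonnegative locally integrable function, let k ≥ 1 be an integer, fix t ≥ 0 and T > 0, and let s : ℝ → ℝ be a nonnegative integrable function. Then both λ ↦ f_k(t; λ, μ) and λ ↦ ∫_0^T f_k(r; λ, μ)·s(r) dr are concave on the set of nonnegative piecewise constant functions on [0, T]: for all nonnegative piecewise constant λ_1, λ_2 and all α ∈ (0,1), f_k(t; α·λ_1 + (1-α)·λ_2, μ) ≥ α·f_k(t; λ_1, μ) + (1-α)·f_k(t; λ_2, μ), and likewise for the integral functional. -/

import Mathlib

open MeasureTheory Real Set Filter Topology intervalIntegral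

/-- The upper incomplete Gamma function `Γ(k, x) = ∫_x^∞ s^{k-1} e^{-s} ds`. -/
noncomputable def uGamma (k : ℕ) (x : ℝ) : ℝ :=
  ∫ s in Set.Ioi x, s ^ (k - 1) * Real.exp (-s)

/-- `f_k(t; λ, μ) = (1/(k-1)!) ∫_0^t λ(τ) exp(-∫_τ^t λ) Γ(k, ∫_τ^t μ) dτ`. -/
noncomputable def fk (k : ℕ) (lam mu : ℝ → ℝ) (t : ℝ) : ℝ :=
  (1 / (Nat.factorial (k - 1) : ℝ)) *
    ∫ τ in (0:ℝ)..t,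
      lam τ * Real.exp (-∫ x in τ..t, lam x) * uGamma k (∫ x in τ..t, mu x)

/-- A piecewise constant function on `[0, T]`:
`f(t) = Σ_{m=1}^M a_m · 1[τ_{m-1} ≤ t < τ_m]` with `0 = τ_0 < τ_1 < … < τ_M = T`. -/
def IsPiecewiseConstOn (T : ℝ) (f : ℝ → ℝ) : Prop :=
  ∃ (M : ℕ) (a : ℕ → ℝ) (τ : ℕ → ℝ), 1 ≤ M ∧ τ 0 = 0 ∧ τ M = T ∧
    (∀ m < M, τ m < τ (m + 1)) ∧
    ∀ t, f t = ∑ m ∈ Finset.range M,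
      a (m + 1) * Set.indicator (Set.Ico (τ m) (τ (m + 1))) (fun _ => (1:ℝ)) t

noncomputable def phiG (k : ℕ) (s : ℝ) : ℝ := s ^ (k - 1) * Real.exp (-s)

lemma phiG_cont (k : ℕ) : Continuous (phiG k) := by
  unfold phiG; continuity

lemma phiG_nonneg (k : ℕ) {s : ℝ} (hs : 0 ≤ s) : 0 ≤ phiG k s :=
  mul_nonneg (pow_nonneg hs _) (Real.exp_pos _).le

lemma phiG_int (k : ℕ) (a : ℝ) : IntegrableOn (phiG k) (Ioi a) := by
  have h0 : IntegrableOn (phiG k) (Ioi 0) := by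
    have := Real.GammaIntegral_convergent (s := ((k - 1 : ℕ) : ℝ) + 1) (by positivity)
    refine this.congr_fun ?_ measurableSet_Ioi
    intro x hx
    simp only [phiG]
    rw [add_sub_cancel_right, Real.rpow_natCast, mul_comm]
  rcases le_or_gt 0 a with h | h
  · exact h0.mono_set (Ioi_subset_Ioi h)
  · have : Ioi a = Ioc a 0 ∪ Ioi 0 := (Ioc_union_Ioi_eq_Ioi h.le).symm
    rw [this, integrableOn_union]
    exact ⟨((phiG_cont k).continuousOn.integrableOn_compact isCompact_Icc).mono_set
      Ioc_subset_Icc_self, h0⟩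

lemma uGamma_eq (k : ℕ) (x : ℝ) : uGamma k x = ∫ s in Set.Ioi x, phiG k s := rfl

lemma uGamma_sub (k : ℕ) {a b : ℝ} (hab : a ≤ b) :
    uGamma k a = uGamma k b + ∫ s in a..b, phiG k s := by
  rw [uGamma_eq, uGamma_eq, intervalIntegral.integral_of_le hab, add_comm,
    ← MeasureTheory.setIntegral_union (Ioc_disjoint_Ioi le_rfl) measurableSet_Ioi
      ((phiG_int k a).mono_set Ioc_subset_Ioi_self) (phiG_int k b),
    Ioc_union_Ioi_eq_Ioi hab]

lemma uGamma_cont (k : ℕ) : Continuous (uGamma k) := by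
  have hint : ∀ a b : ℝ, IntervalIntegrable (phiG k) volume a b := fun a b =>
    (phiG_cont k).intervalIntegrable a b
  have : uGamma k = fun x => uGamma k 0 - ∫ s in (0:ℝ)..x, phiG k s := by
    funext x
    rcases le_or_gt 0 x with h | h
    · rw [uGamma_sub k h]; ring
    · rw [uGamma_sub k h.le, intervalIntegral.integral_symm]; ring
  rw [this]
  exact continuous_const.sub (intervalIntegral.continuous_primitive hint 0)

lemma uGamma_nonneg (k : ℕ) {x : ℝ} (hx : 0 ≤ x) : 0 ≤ uGamma k x := by
  rw [uGamma_eq]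
  exact setIntegral_nonneg measurableSet_Ioi fun s hs => phiG_nonneg k (hx.trans (le_of_lt hs))

lemma uGamma_le (k : ℕ) {x : ℝ} (hx : 0 ≤ x) : uGamma k x ≤ uGamma k 0 := by
  rw [uGamma_sub k hx]
  have : 0 ≤ ∫ s in (0:ℝ)..x, phiG k s := by
    apply intervalIntegral.integral_nonneg hx
    intro s hs; exact phiG_nonneg k hs.1
  linarith

lemma uGamma_zero_pos (k : ℕ) (hk : 1 ≤ k) : 0 < uGamma k 0 := by
  have : uGamma k 0 = Real.Gamma k := by
    rw [Real.Gamma_eq_integral (by positivity : (0:ℝ) < k), uGamma_eq]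
    apply setIntegral_congr_fun measurableSet_Ioi
    intro x hx
    simp only [phiG]
    rw [show ((k:ℝ) - 1) = (((k-1:ℕ)):ℝ) by push_cast [hk]; ring, Real.rpow_natCast, mul_comm]
  rw [this]
  exact Real.Gamma_pos_of_pos (by positivity)


lemma pw_measurable {T : ℝ} {f : ℝ → ℝ} (h : IsPiecewiseConstOn T f) : Measurable f := by
  obtain ⟨M, a, τ, -, -, -, -, hf⟩ := h
  have : f = fun t => ∑ m ∈ Finset.range M,
      a (m + 1) * Set.indicator (Set.Ico (τ m) (τ (m + 1))) (fun _ => (1:ℝ)) t := funext hf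
  rw [this]
  exact Finset.measurable_sum _ fun m _ =>
    (measurable_const.indicator measurableSet_Ico).const_mul _

lemma pw_bound {T : ℝ} {f : ℝ → ℝ} (h : IsPiecewiseConstOn T f) : ∃ C, ∀ x, |f x| ≤ C := by
  obtain ⟨M, a, τ, -, -, -, -, hf⟩ := h
  refine ⟨∑ m ∈ Finset.range M, |a (m + 1)|, fun x => ?_⟩
  rw [hf x]
  refine (Finset.abs_sum_le_sum_abs _ _).trans (Finset.sum_le_sum fun m _ => ?_)
  rw [abs_mul]
  have : |Set.indicator (Set.Ico (τ m) (τ (m + 1))) (fun _ => (1:ℝ)) x| ≤ 1 := by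
    by_cases hx : x ∈ Set.Ico (τ m) (τ (m + 1)) <;> simp [Set.indicator, hx]
  calc |a (m+1)| * _ ≤ |a (m+1)| * 1 := by
        exact mul_le_mul_of_nonneg_left this (abs_nonneg _)
    _ = |a (m+1)| := mul_one _

lemma pw_intIntble {T : ℝ} {f : ℝ → ℝ} (h : IsPiecewiseConstOn T f) (a b : ℝ) :
    IntervalIntegrable f volume a b := by
  obtain ⟨C, hC⟩ := pw_bound h
  rw [intervalIntegrable_iff]
  have hfin : volume (Set.uIoc a b) < ⊤ := by rw [Set.uIoc]; exact measure_Ioc_lt_top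
  exact (integrableOn_const hfin.ne).mono' (pw_measurable h).aestronglyMeasurable
    (Filter.Eventually.of_forall fun x => hC x)

lemma pw_right_const {T : ℝ} {f : ℝ → ℝ} (h : IsPiecewiseConstOn T f) (x : ℝ) :
    ∃ ε > 0, ∀ y ∈ Set.Ico x (x + ε), f y = f x := by
  obtain ⟨M, a, τ, hM, hτ0, hτM, hτlt, hf⟩ := h
  have hmono : ∀ j ≤ M, ∀ i ≤ j, τ i ≤ τ j := by
    intro j hj
    induction j with
    | zero => intro i hi; rw [Nat.le_zero.mp hi]
    | succ n ih =>
      intro i hi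
      rcases Nat.lt_or_ge i (n+1) with h' | h'
      · exact (ih (by omega) i (by omega)).trans (hτlt n (by omega)).le
      · have : i = n + 1 := by omega
        rw [this]
  -- evaluation lemma
  have heval : ∀ m < M, ∀ y ∈ Set.Ico (τ m) (τ (m+1)), f y = a (m+1) := by
    intro m hm y hy
    rw [hf y]
    rw [Finset.sum_eq_single m]
    · simp [Set.indicator, hy]
    · intro j hj hjm
      rw [Finset.mem_range] at hj
      have : y ∉ Set.Ico (τ j) (τ (j+1)) := by
        intro hyj
        rcases Nat.lt_or_ge j m with h' | h'
        · exact absurd hy.1 (not_le.mpr (lt_of_lt_of_le hyj.2 (hmono m hm.le (j+1) (by omega))))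
        · have : m < j := by omega
          exact absurd hyj.1 (not_le.mpr (lt_of_lt_of_le hy.2 (hmono j hj.le (m+1) (by omega))))
      simp [Set.indicator, this]
    · intro hmm; exact absurd (Finset.mem_range.mpr hm) hmm
  have hzero : ∀ y, y < 0 ∨ T ≤ y → f y = 0 := by
    intro y hy
    rw [hf y]
    apply Finset.sum_eq_zero
    intro m hm
    rw [Finset.mem_range] at hm
    have : y ∉ Set.Ico (τ m) (τ (m+1)) := by
      intro hym
      rcases hy with h' | h'
      · have : (0:ℝ) ≤ τ m := hτ0 ▸ hmono m hm.le 0 (by omega)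
        linarith [hym.1]
      · have : τ (m+1) ≤ T := hτM ▸ hmono M le_rfl (m+1) (by omega)
        linarith [hym.2]
    simp [Set.indicator, this]
  rcases lt_or_ge x 0 with hx | hx
  · exact ⟨-x, by linarith, fun y hy => by
      rw [hzero y (Or.inl (by linarith [hy.2])), hzero x (Or.inl hx)]⟩
  rcases lt_or_ge x T with hxT | hxT
  swap
  · exact ⟨1, one_pos, fun y hy => by
      rw [hzero y (Or.inr (hxT.trans hy.1)), hzero x (Or.inr hxT)]⟩
  -- find the piece
  have hfind : ∀ n ≤ M, x < τ n → ∃ m < n, τ m ≤ x ∧ x < τ (m+1) := by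
    intro n
    induction n with
    | zero => intro _ h0; rw [hτ0] at h0; linarith
    | succ n ih =>
      intro hn hlt
      rcases le_or_gt (τ n) x with h' | h'
      · exact ⟨n, Nat.lt_succ_self n, h', hlt⟩
      · obtain ⟨m, hm, hms⟩ := ih (by omega) h'
        exact ⟨m, by omega, hms⟩
  obtain ⟨m, hm, hm1, hm2⟩ := hfind M le_rfl (by rw [hτM]; exact hxT)
  refine ⟨τ (m+1) - x, by linarith, fun y hy => ?_⟩
  have hy' : y ∈ Set.Ico (τ m) (τ (m+1)) := ⟨hm1.trans hy.1, by linarith [hy.2]⟩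
  rw [heval m hm y hy', heval m hm x ⟨hm1, hm2⟩]

lemma ftc_exp {f : ℝ → ℝ}
    (hint : ∀ a b : ℝ, IntervalIntegrable f volume a b)
    (hrc : ∀ x, ∃ ε > 0, ∀ y ∈ Set.Ico x (x + ε), f y = f x)
    {a b : ℝ} (hab : a ≤ b) :
    (∫ τ in a..b, f τ * Real.exp ((∫ x in (0:ℝ)..τ, f x) - ∫ x in (0:ℝ)..b, f x))
      = 1 - Real.exp ((∫ x in (0:ℝ)..a, f x) - ∫ x in (0:ℝ)..b, f x) := by
  set L : ℝ → ℝ := fun τ => ∫ x in (0:ℝ)..τ, f x with hL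
  set u : ℝ → ℝ := fun τ => Real.exp (L τ - L b) with hu
  have hLc : Continuous L := intervalIntegral.continuous_primitive hint 0
  have huc : Continuous u := (hLc.sub continuous_const).rexp
  have hderiv : ∀ τ : ℝ, HasDerivWithinAt u (f τ * u τ) (Set.Ici τ) τ := by
    intro τ
    obtain ⟨ε, hε, hεf⟩ := hrc τ
    have hmem : Set.Ico τ (τ + ε) ∈ 𝓝[≥] τ :=
      Ico_mem_nhdsGE (by linarith)
    have heq : ∀ y ∈ Set.Ico τ (τ + ε), L y = L τ + f τ * (y - τ) := by
      intro y hy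
      have h1 : L y - L τ = ∫ x in τ..y, f x :=
        intervalIntegral.integral_interval_sub_left (hint 0 y) (hint 0 τ)
      have h2 : (∫ x in τ..y, f x) = ∫ x in τ..y, f τ := by
        apply intervalIntegral.integral_congr
        intro x hx
        rw [Set.uIcc_of_le hy.1] at hx
        exact hεf x ⟨hx.1, lt_of_le_of_lt hx.2 hy.2⟩
      rw [h2, intervalIntegral.integral_const, smul_eq_mul] at h1
      have : (y - τ) * f τ = f τ * (y - τ) := mul_comm _ _
      linarith [h1]
    have haff : HasDerivWithinAt (fun y => L τ + f τ * (y - τ)) (f τ) (Set.Ici τ) τ := by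
      have : HasDerivAt (fun y : ℝ => L τ + f τ * (y - τ)) (f τ) τ := by
        simpa using (((hasDerivAt_id τ).sub_const τ).const_mul (f τ)).const_add (L τ)
      exact this.hasDerivWithinAt
    have hLd : HasDerivWithinAt L (f τ) (Set.Ici τ) τ := by
      apply haff.congr_of_eventuallyEq
      · exact Filter.eventuallyEq_of_mem hmem fun y hy => heq y hy
      · simp only [sub_self, mul_zero, add_zero]
    have := (hLd.sub_const (L b)).exp
    simpa [hu, mul_comm] using this
  have key := intervalIntegral.integral_eq_sub_of_hasDeriv_right_of_le hab
    (huc.continuousOn) (fun x _ => (hderiv x).mono Set.Ioi_subset_Ici_self)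
    ((hint a b).mul_continuousOn huc.continuousOn)
  rw [key]
  simp [hu]
  rfl

noncomputable def Aset (mu : ℝ → ℝ) (t s : ℝ) : ℝ :=
  sInf ({τ | τ ∈ Set.Icc 0 t ∧ (∫ x in τ..t, mu x) < s} ∪ {t})

lemma aset_bdd {mu : ℝ → ℝ} {t : ℝ} (ht : 0 ≤ t) (s : ℝ) :
    BddBelow ({τ | τ ∈ Set.Icc 0 t ∧ (∫ x in τ..t, mu x) < s} ∪ {t}) := by
  refine ⟨0, fun τ hτ => ?_⟩
  rcases hτ with h | h
  · exact h.1.1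
  · rw [Set.mem_singleton_iff] at h; rw [h]; exact ht

lemma aset_mem_Icc {mu : ℝ → ℝ} {t : ℝ} (ht : 0 ≤ t) (s : ℝ) :
    Aset mu t s ∈ Set.Icc 0 t := by
  constructor
  · exact le_csInf ⟨t, Or.inr rfl⟩ fun τ hτ => by
      rcases hτ with h | h
      · exact h.1.1
      · rw [Set.mem_singleton_iff] at h; rw [h]; exact ht
  · exact csInf_le (aset_bdd ht s) (Or.inr rfl)

lemma aset_anti {mu : ℝ → ℝ} {t : ℝ} (ht : 0 ≤ t) : Antitone (Aset mu t) := by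
  intro s1 s2 h12
  unfold Aset
  apply csInf_le_csInf (aset_bdd ht s2) ⟨t, Or.inr rfl⟩
  intro τ hτ
  rcases hτ with h | h
  · exact Or.inl ⟨h.1, lt_of_lt_of_le h.2 h12⟩
  · exact Or.inr h

lemma h_anti {mu : ℝ → ℝ} {t : ℝ} (hmu0 : ∀ x, 0 ≤ mu x)
    (hmuII : ∀ a b : ℝ, IntervalIntegrable mu volume a b) {τ1 τ2 : ℝ} (h12 : τ1 ≤ τ2) :
    (∫ x in τ2..t, mu x) ≤ ∫ x in τ1..t, mu x := by
  have := intervalIntegral.integral_add_adjacent_intervals (hmuII τ1 τ2) (hmuII τ2 t)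
  have hnn : 0 ≤ ∫ x in τ1..τ2, mu x :=
    intervalIntegral.integral_nonneg h12 fun x _ => hmu0 x
  linarith

lemma aset_ae {mu : ℝ → ℝ} {t : ℝ} (hmu0 : ∀ x, 0 ≤ mu x)
    (hmuII : ∀ a b : ℝ, IntervalIntegrable mu volume a b) (ht : 0 ≤ t) {s : ℝ} (hs : 0 < s) :
    ((Set.Ioc 0 t ∩ {τ : ℝ | (∫ x in τ..t, mu x) < s} : Set ℝ)) =ᵐ[volume]
      (Set.Ioc (Aset mu t s) t : Set ℝ) := by
  have hA := aset_mem_Icc (mu := mu) ht s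
  have hsub1 : ∀ τ ∈ Set.Ioc (Aset mu t s) t, (∫ x in τ..t, mu x) < s := by
    intro τ hτ
    obtain ⟨τ', hτ', hlt⟩ := exists_lt_of_csInf_lt ⟨t, Or.inr rfl⟩ hτ.1
    rcases hτ' with h | h
    · exact lt_of_le_of_lt (h_anti hmu0 hmuII hlt.le) h.2
    · rw [Set.mem_singleton_iff] at h
      rw [h] at hlt
      exact absurd hτ.2 (not_le.mpr hlt)
  have hsub2 : ∀ τ, τ ∈ Set.Ioc 0 t → (∫ x in τ..t, mu x) < s → Aset mu t s ≤ τ :=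
    fun τ hτ hlt => csInf_le (aset_bdd ht s) (Or.inl ⟨⟨hτ.1.le, hτ.2⟩, hlt⟩)
  rw [MeasureTheory.ae_eq_set]
  constructor
  · apply measure_mono_null (t := ({Aset mu t s} : Set ℝ))
    · intro τ hτ
      obtain ⟨⟨hτ1, hτ2⟩, hτ3⟩ := hτ
      rw [Set.mem_singleton_iff]
      rw [Set.mem_Ioc, not_and_or] at hτ3
      rcases hτ3 with h | h
      · push_neg at h
        exact le_antisymm h (hsub2 τ hτ1 hτ2)
      · exact absurd hτ1.2 h
    · exact volume_singleton
  · apply measure_mono_null (t := (∅ : Set ℝ))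
    · intro τ hτ
      obtain ⟨hτ1, hτ2⟩ := hτ
      exact absurd ⟨⟨lt_of_le_of_lt (hA.1) hτ1.1, hτ1.2⟩, hsub1 τ hτ1⟩ hτ2
    · exact measure_empty

lemma fk_repr {mu lam : ℝ → ℝ} (hmu0 : ∀ x, 0 ≤ mu x)
    (hmuII : ∀ a b : ℝ, IntervalIntegrable mu volume a b)
    (hlam_meas : Measurable lam) (hlam0 : ∀ x, 0 ≤ lam x)
    (hlamII : ∀ a b : ℝ, IntervalIntegrable lam volume a b)
    (hlam_rc : ∀ x, ∃ ε > 0, ∀ y ∈ Set.Ico x (x + ε), lam y = lam x)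
    (k : ℕ) {t : ℝ} (ht : 0 ≤ t) :
    (∫ τ in (0:ℝ)..t, lam τ * Real.exp (-∫ x in τ..t, lam x) * uGamma k (∫ x in τ..t, mu x))
      = ∫ s in Set.Ioi (0:ℝ), phiG k s *
          (1 - Real.exp ((∫ x in (0:ℝ)..(Aset mu t s), lam x) - ∫ x in (0:ℝ)..t, lam x)) := by
  set L : ℝ → ℝ := fun τ => ∫ x in (0:ℝ)..τ, lam x with hLdef
  set h : ℝ → ℝ := fun τ => ∫ x in τ..t, mu x with hhdef
  have hLc : Continuous L := intervalIntegral.continuous_primitive hlamII 0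
  have hhc : Continuous h := by
    have : h = fun τ => (∫ x in (0:ℝ)..t, mu x) - ∫ x in (0:ℝ)..τ, mu x := by
      funext τ
      rw [hhdef]
      exact (intervalIntegral.integral_interval_sub_left (hmuII 0 t) (hmuII 0 τ)).symm
    rw [this]
    exact continuous_const.sub (intervalIntegral.continuous_primitive hmuII 0)
  have hLsub : ∀ τ : ℝ, (∫ x in τ..t, lam x) = L t - L τ := fun τ =>
    (intervalIntegral.integral_interval_sub_left (hlamII 0 t) (hlamII 0 τ)).symm
  have hLmono : Monotone L := by
    intro x y hxy
    have heq := intervalIntegral.integral_interval_sub_left (hlamII 0 y) (hlamII 0 x)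
    have hnn : 0 ≤ ∫ u in x..y, lam u :=
      intervalIntegral.integral_nonneg hxy fun u _ => hlam0 u
    simp only [hLdef]
    linarith
  -- the product-space set and integrand
  set S : Set (ℝ × ℝ) := {p | h p.1 < p.2} with hSdef
  have hSmeas : MeasurableSet S :=
    measurableSet_lt (hhc.measurable.comp measurable_fst) measurable_snd
  set G : ℝ × ℝ → ℝ :=
    fun p => lam p.1 * Real.exp (L p.1 - L t) * S.indicator (fun q => phiG k q.2) p with hGdef
  have hGmeas : Measurable G := by
    apply Measurable.mul
    · exact (hlam_meas.comp measurable_fst).mul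
        (((hLc.measurable.comp measurable_fst).sub measurable_const).exp)
    · exact ((phiG_cont k).measurable.comp measurable_snd).indicator hSmeas
  -- integrability on the product
  have hGint : Integrable (Function.uncurry fun τ s => G (τ, s))
      ((volume.restrict (Set.Ioc 0 t)).prod (volume.restrict (Set.Ioi 0))) := by
    have hdom : Integrable (fun p : ℝ × ℝ => lam p.1 * phiG k p.2)
        ((volume.restrict (Set.Ioc 0 t)).prod (volume.restrict (Set.Ioi 0))) := by
      apply MeasureTheory.Integrable.mul_prod
      · exact (intervalIntegrable_iff_integrableOn_Ioc_of_le ht).mp (hlamII 0 t)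
      · exact phiG_int k 0
    apply hdom.mono' (hGmeas.aestronglyMeasurable.congr ?_)
    · rw [Measure.prod_restrict]
      rw [MeasureTheory.ae_restrict_iff' (measurableSet_Ioc.prod measurableSet_Ioi)]
      apply Filter.Eventually.of_forall
      rintro ⟨τ, s⟩ ⟨hτ, hs⟩
      have hnn1 : 0 ≤ lam τ := hlam0 τ
      have hexp : Real.exp (L τ - L t) ≤ 1 := by
        rw [Real.exp_le_one_iff]
        have := hLmono hτ.2
        linarith
      have hind : |S.indicator (fun q => phiG k q.2) (τ, s)| ≤ phiG k s := by
        by_cases hmem : (τ, s) ∈ S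
        · rw [Set.indicator_of_mem hmem, abs_of_nonneg (phiG_nonneg k (le_of_lt hs))]
        · rw [Set.indicator_of_notMem hmem, abs_zero]
          exact phiG_nonneg k (le_of_lt hs)
      have : |G (τ, s)| = lam τ * Real.exp (L τ - L t) * |S.indicator (fun q => phiG k q.2) (τ, s)| := by
        rw [hGdef]
        simp only [abs_mul, abs_of_nonneg hnn1, abs_of_nonneg (Real.exp_pos _).le]
      rw [Function.uncurry]
      simp only [Real.norm_eq_abs]
      rw [this]
      calc lam τ * Real.exp (L τ - L t) * |S.indicator (fun q => phiG k q.2) (τ, s)|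
          ≤ lam τ * 1 * phiG k s := by
            apply mul_le_mul (by nlinarith [Real.exp_pos (L τ - L t)]) hind (abs_nonneg _)
            positivity
        _ = lam τ * phiG k s := by ring
    · exact Filter.EventuallyEq.rfl
  have hAmem : ∀ s : ℝ, Aset mu t s ∈ Set.Icc 0 t := fun s => aset_mem_Icc ht s
  have step1 : (∫ τ in (0:ℝ)..t,
        lam τ * Real.exp (-∫ x in τ..t, lam x) * uGamma k (∫ x in τ..t, mu x))
      = ∫ τ in Set.Ioc 0 t, (∫ s in Set.Ioi (0:ℝ), G (τ, s)) := by
    rw [intervalIntegral.integral_of_le ht]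
    apply setIntegral_congr_fun measurableSet_Ioc
    intro τ hτ
    have hh0 : 0 ≤ h τ := intervalIntegral.integral_nonneg hτ.2 fun x _ => hmu0 x
    have huG : uGamma k (h τ) = ∫ s in Set.Ioi (0:ℝ), (Set.Ioi (h τ)).indicator (phiG k) s := by
      rw [setIntegral_indicator measurableSet_Ioi, uGamma_eq]
      congr 1
      rw [Set.Ioi_inter_Ioi, max_eq_right hh0]
    show lam τ * Real.exp (-∫ x in τ..t, lam x) * uGamma k (h τ) = _
    rw [hLsub τ, neg_sub, huG, ← MeasureTheory.integral_const_mul]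
    apply setIntegral_congr_fun measurableSet_Ioi
    intro s hs
    have hip : (Set.Ioi (h τ)).indicator (phiG k) s = S.indicator (fun q => phiG k q.2) (τ, s) := by
      by_cases hmem : h τ < s
      · rw [Set.indicator_of_mem (Set.mem_Ioi.mpr hmem),
          Set.indicator_of_mem (show (τ, s) ∈ S from hmem)]
      · rw [Set.indicator_of_notMem (fun hc => hmem (Set.mem_Ioi.mp hc)),
          Set.indicator_of_notMem (show (τ, s) ∉ S from hmem)]
    rw [hGdef]
    dsimp only
    rw [hip, mul_assoc]
  have step2 : (∫ τ in Set.Ioc 0 t, (∫ s in Set.Ioi (0:ℝ), G (τ, s)))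
      = ∫ s in Set.Ioi (0:ℝ), (∫ τ in Set.Ioc 0 t, G (τ, s)) :=
    MeasureTheory.integral_integral_swap hGint
  have step3 : ∀ s ∈ Set.Ioi (0:ℝ), (∫ τ in Set.Ioc 0 t, G (τ, s))
      = phiG k s * (1 - Real.exp ((∫ x in (0:ℝ)..(Aset mu t s), lam x)
          - ∫ x in (0:ℝ)..t, lam x)) := by
    intro s hs
    rw [Set.mem_Ioi] at hs
    have hseq : ∀ τ : ℝ, G (τ, s) = ({τ : ℝ | h τ < s}).indicator
        (fun τ => lam τ * Real.exp (L τ - L t) * phiG k s) τ := by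
      intro τ
      by_cases hmem : h τ < s
      · rw [hGdef]
        dsimp only
        rw [Set.indicator_of_mem (show (τ, s) ∈ S from hmem),
          Set.indicator_of_mem (show τ ∈ {τ : ℝ | h τ < s} from hmem)]
      · rw [hGdef]
        dsimp only
        rw [Set.indicator_of_notMem (show (τ, s) ∉ S from hmem),
          Set.indicator_of_notMem (show τ ∉ {τ : ℝ | h τ < s} from hmem), mul_zero]
    simp_rw [hseq]
    rw [setIntegral_indicator (measurableSet_lt hhc.measurable measurable_const)]
    rw [setIntegral_congr_set (aset_ae hmu0 hmuII ht hs)]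
    rw [← intervalIntegral.integral_of_le (hAmem s).2]
    have hftc := ftc_exp hlamII hlam_rc (a := Aset mu t s) (b := t) (hAmem s).2
    calc (∫ τ in (Aset mu t s)..t, lam τ * Real.exp (L τ - L t) * phiG k s)
        = (∫ τ in (Aset mu t s)..t, lam τ * Real.exp (L τ - L t)) * phiG k s := by
          rw [← intervalIntegral.integral_mul_const]
      _ = (1 - Real.exp ((∫ x in (0:ℝ)..(Aset mu t s), lam x)
            - ∫ x in (0:ℝ)..t, lam x)) * phiG k s := by rw [hftc]
      _ = _ := by ring
  rw [step1, step2]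
  exact setIntegral_congr_fun measurableSet_Ioi step3

lemma L_mono {lam : ℝ → ℝ} (hlam0 : ∀ x, 0 ≤ lam x)
    (hlamII : ∀ a b : ℝ, IntervalIntegrable lam volume a b)
    {x y : ℝ} (hxy : x ≤ y) : (∫ u in (0:ℝ)..x, lam u) ≤ ∫ u in (0:ℝ)..y, lam u := by
  have heq := intervalIntegral.integral_interval_sub_left (hlamII 0 y) (hlamII 0 x)
  have hnn : 0 ≤ ∫ u in x..y, lam u :=
    intervalIntegral.integral_nonneg hxy fun u _ => hlam0 u
  linarith

lemma repr_integrable {mu lam : ℝ → ℝ}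
    (hlam0 : ∀ x, 0 ≤ lam x)
    (hlamII : ∀ a b : ℝ, IntervalIntegrable lam volume a b)
    (k : ℕ) {t : ℝ} (ht : 0 ≤ t) :
    IntegrableOn (fun s => phiG k s *
      (1 - Real.exp ((∫ x in (0:ℝ)..(Aset mu t s), lam x) - ∫ x in (0:ℝ)..t, lam x)))
      (Set.Ioi (0:ℝ)) := by
  have hanti : Antitone (fun s => ∫ x in (0:ℝ)..(Aset mu t s), lam x) := by
    intro s1 s2 h12
    exact L_mono hlam0 hlamII (aset_anti (mu := mu) ht h12)
  have hmeas : Measurable (fun s => phiG k s *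
      (1 - Real.exp ((∫ x in (0:ℝ)..(Aset mu t s), lam x) - ∫ x in (0:ℝ)..t, lam x))) :=
    (phiG_cont k).measurable.mul
      ((measurable_const.sub ((hanti.measurable.sub measurable_const).exp)))
  apply (phiG_int k 0).mono' hmeas.aestronglyMeasurable
  rw [MeasureTheory.ae_restrict_iff' measurableSet_Ioi]
  apply Filter.Eventually.of_forall
  intro s hs
  rw [Set.mem_Ioi] at hs
  have hexp : Real.exp ((∫ x in (0:ℝ)..(Aset mu t s), lam x) - ∫ x in (0:ℝ)..t, lam x) ≤ 1 := by
    rw [Real.exp_le_one_iff]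
    have := L_mono hlam0 hlamII (aset_mem_Icc (mu := mu) ht s).2
    linarith
  have hexp0 := Real.exp_pos ((∫ x in (0:ℝ)..(Aset mu t s), lam x) - ∫ x in (0:ℝ)..t, lam x)
  rw [Real.norm_eq_abs, abs_mul, abs_of_nonneg (phiG_nonneg k hs.le),
    abs_of_nonneg (by linarith : (0:ℝ) ≤ 1 - Real.exp _)]
  nlinarith [phiG_nonneg k hs.le]

lemma core_nonneg_bound {mu lam : ℝ → ℝ} (hmu0 : ∀ x, 0 ≤ mu x)
    (hmuII : ∀ a b : ℝ, IntervalIntegrable mu volume a b)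
    (hlam_meas : Measurable lam) (hlam0 : ∀ x, 0 ≤ lam x)
    (hlamII : ∀ a b : ℝ, IntervalIntegrable lam volume a b)
    (hlam_rc : ∀ x, ∃ ε > 0, ∀ y ∈ Set.Ico x (x + ε), lam y = lam x)
    (k : ℕ) {t : ℝ} (ht : 0 ≤ t) :
    (0 ≤ ∫ τ in (0:ℝ)..t,
        lam τ * Real.exp (-∫ x in τ..t, lam x) * uGamma k (∫ x in τ..t, mu x)) ∧
    (∫ τ in (0:ℝ)..t,
        lam τ * Real.exp (-∫ x in τ..t, lam x) * uGamma k (∫ x in τ..t, mu x))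
      ≤ uGamma k 0 := by
  rw [fk_repr hmu0 hmuII hlam_meas hlam0 hlamII hlam_rc k ht]
  have hptwise : ∀ s ∈ Set.Ioi (0:ℝ), 0 ≤ phiG k s *
      (1 - Real.exp ((∫ x in (0:ℝ)..(Aset mu t s), lam x) - ∫ x in (0:ℝ)..t, lam x)) ∧
      phiG k s * (1 - Real.exp ((∫ x in (0:ℝ)..(Aset mu t s), lam x)
        - ∫ x in (0:ℝ)..t, lam x)) ≤ phiG k s := by
    intro s hs
    rw [Set.mem_Ioi] at hs
    have hexp : Real.exp ((∫ x in (0:ℝ)..(Aset mu t s), lam x) - ∫ x in (0:ℝ)..t, lam x) ≤ 1 := by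
      rw [Real.exp_le_one_iff]
      have := L_mono hlam0 hlamII (aset_mem_Icc (mu := mu) ht s).2
      linarith
    have hexp0 := Real.exp_pos ((∫ x in (0:ℝ)..(Aset mu t s), lam x) - ∫ x in (0:ℝ)..t, lam x)
    have hφ := phiG_nonneg k hs.le
    exact ⟨mul_nonneg hφ (by linarith), by nlinarith⟩
  constructor
  · exact setIntegral_nonneg measurableSet_Ioi fun s hs => (hptwise s hs).1
  · rw [show uGamma k 0 = ∫ s in Set.Ioi (0:ℝ), phiG k s from rfl]
    exact setIntegral_mono_on (repr_integrable hlam0 hlamII k ht) (phiG_int k 0)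
      measurableSet_Ioi fun s hs => (hptwise s hs).2

lemma core_concave {mu lam1 lam2 : ℝ → ℝ} (hmu0 : ∀ x, 0 ≤ mu x)
    (hmuII : ∀ a b : ℝ, IntervalIntegrable mu volume a b)
    (hm1 : Measurable lam1) (h10 : ∀ x, 0 ≤ lam1 x)
    (hII1 : ∀ a b : ℝ, IntervalIntegrable lam1 volume a b)
    (hrc1 : ∀ x, ∃ ε > 0, ∀ y ∈ Set.Ico x (x + ε), lam1 y = lam1 x)
    (hm2 : Measurable lam2) (h20 : ∀ x, 0 ≤ lam2 x)
    (hII2 : ∀ a b : ℝ, IntervalIntegrable lam2 volume a b)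
    (hrc2 : ∀ x, ∃ ε > 0, ∀ y ∈ Set.Ico x (x + ε), lam2 y = lam2 x)
    {α : ℝ} (hα : α ∈ Set.Ioo (0:ℝ) 1)
    (k : ℕ) {t : ℝ} (ht : 0 ≤ t) :
    α * (∫ τ in (0:ℝ)..t,
          lam1 τ * Real.exp (-∫ x in τ..t, lam1 x) * uGamma k (∫ x in τ..t, mu x))
      + (1 - α) * (∫ τ in (0:ℝ)..t,
          lam2 τ * Real.exp (-∫ x in τ..t, lam2 x) * uGamma k (∫ x in τ..t, mu x))
    ≤ ∫ τ in (0:ℝ)..t,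
        (fun x => α * lam1 x + (1 - α) * lam2 x) τ
          * Real.exp (-∫ x in τ..t, (fun x => α * lam1 x + (1 - α) * lam2 x) x)
          * uGamma k (∫ x in τ..t, mu x) := by
  set lamc : ℝ → ℝ := fun x => α * lam1 x + (1 - α) * lam2 x with hlamc
  have hmc : Measurable lamc := (hm1.const_mul α).add (hm2.const_mul (1 - α))
  have hc0 : ∀ x, 0 ≤ lamc x := fun x =>
    add_nonneg (mul_nonneg hα.1.le (h10 x)) (mul_nonneg (by linarith [hα.2]) (h20 x))
  have hIIc : ∀ a b : ℝ, IntervalIntegrable lamc volume a b := fun a b =>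
    ((hII1 a b).const_mul α).add ((hII2 a b).const_mul (1 - α))
  have hrcc : ∀ x, ∃ ε > 0, ∀ y ∈ Set.Ico x (x + ε), lamc y = lamc x := by
    intro x
    obtain ⟨ε1, hε1, h1⟩ := hrc1 x
    obtain ⟨ε2, hε2, h2⟩ := hrc2 x
    refine ⟨min ε1 ε2, lt_min hε1 hε2, fun y hy => ?_⟩
    rw [hlamc]
    dsimp only
    rw [h1 y ⟨hy.1, lt_of_lt_of_le hy.2 (by linarith [min_le_left ε1 ε2])⟩,
      h2 y ⟨hy.1, lt_of_lt_of_le hy.2 (by linarith [min_le_right ε1 ε2])⟩]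
  have hLlin : ∀ a b : ℝ, (∫ x in a..b, lamc x)
      = α * (∫ x in a..b, lam1 x) + (1 - α) * (∫ x in a..b, lam2 x) := by
    intro a b
    rw [hlamc]
    rw [intervalIntegral.integral_add ((hII1 a b).const_mul α) ((hII2 a b).const_mul (1 - α)),
      intervalIntegral.integral_const_mul, intervalIntegral.integral_const_mul]
  rw [fk_repr hmu0 hmuII hm1 h10 hII1 hrc1 k ht,
    fk_repr hmu0 hmuII hm2 h20 hII2 hrc2 k ht,
    show (∫ τ in (0:ℝ)..t, (fun x => α * lam1 x + (1 - α) * lam2 x) τ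
          * Real.exp (-∫ x in τ..t, (fun x => α * lam1 x + (1 - α) * lam2 x) x)
          * uGamma k (∫ x in τ..t, mu x))
      = ∫ τ in (0:ℝ)..t, lamc τ * Real.exp (-∫ x in τ..t, lamc x)
          * uGamma k (∫ x in τ..t, mu x) from rfl,
    fk_repr hmu0 hmuII hmc hc0 hIIc hrcc k ht]
  rw [← MeasureTheory.integral_const_mul, ← MeasureTheory.integral_const_mul,
    ← MeasureTheory.integral_add
      ((repr_integrable h10 hII1 k ht).const_mul α)
      ((repr_integrable h20 hII2 k ht).const_mul (1 - α))]
  apply setIntegral_mono_on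
    (((repr_integrable h10 hII1 k ht).const_mul α).add
      ((repr_integrable h20 hII2 k ht).const_mul (1 - α)))
    (repr_integrable hc0 hIIc k ht) measurableSet_Ioi
  intro s hs
  rw [Set.mem_Ioi] at hs
  simp only [Pi.add_apply]
  set A := Aset mu t s with hA
  have hAt : A ≤ t := (aset_mem_Icc (mu := mu) ht s).2
  set x1 : ℝ := (∫ x in (0:ℝ)..A, lam1 x) - ∫ x in (0:ℝ)..t, lam1 x with hx1
  set x2 : ℝ := (∫ x in (0:ℝ)..A, lam2 x) - ∫ x in (0:ℝ)..t, lam2 x with hx2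
  have hxc : (∫ x in (0:ℝ)..A, lamc x) - (∫ x in (0:ℝ)..t, lamc x) = α * x1 + (1 - α) * x2 := by
    rw [hLlin, hLlin, hx1, hx2]; ring
  rw [hxc]
  have hconv : Real.exp (α * x1 + (1 - α) * x2) ≤ α * Real.exp x1 + (1 - α) * Real.exp x2 := by
    have := convexOn_exp.2 (Set.mem_univ x1) (Set.mem_univ x2) hα.1.le
      (by linarith [hα.2] : (0:ℝ) ≤ 1 - α) (by ring)
    simpa using this
  have hφ := phiG_nonneg k hs.le
  nlinarith [hφ, hconv]

lemma core_meas {mu lam : ℝ → ℝ}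
    (hmuII : ∀ a b : ℝ, IntervalIntegrable mu volume a b)
    (hlam_meas : Measurable lam)
    (hlamII : ∀ a b : ℝ, IntervalIntegrable lam volume a b) (k : ℕ) :
    ∃ g : ℝ → ℝ, Measurable g ∧ ∀ r : ℝ, 0 ≤ r →
      (∫ τ in (0:ℝ)..r, lam τ * Real.exp (-∫ x in τ..r, lam x) * uGamma k (∫ x in τ..r, mu x))
        = g r := by
  set L : ℝ → ℝ := fun τ => ∫ x in (0:ℝ)..τ, lam x with hL
  set Mu : ℝ → ℝ := fun τ => ∫ x in (0:ℝ)..τ, mu x with hMu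
  have hLc : Continuous L := intervalIntegral.continuous_primitive hlamII 0
  have hMuc : Continuous Mu := intervalIntegral.continuous_primitive hmuII 0
  set D : Set (ℝ × ℝ) := {q | 0 < q.2 ∧ q.2 ≤ q.1} with hD
  have hDm : MeasurableSet D := (measurableSet_lt measurable_const measurable_snd).inter
      (measurableSet_le measurable_snd measurable_fst)
  set Φ : ℝ × ℝ → ℝ := D.indicator
      (fun q => lam q.2 * Real.exp (L q.2 - L q.1) * uGamma k (Mu q.1 - Mu q.2)) with hΦ
  have hΦm : Measurable Φ := Measurable.indicator
      (((hlam_meas.comp measurable_snd).mul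
        (((hLc.measurable.comp measurable_snd).sub (hLc.measurable.comp measurable_fst)).exp)).mul
        ((uGamma_cont k).measurable.comp
          ((hMuc.measurable.comp measurable_fst).sub (hMuc.measurable.comp measurable_snd)))) hDm
  refine ⟨fun r => ∫ τ, Φ (r, τ), (hΦm.stronglyMeasurable.integral_prod_right').measurable, ?_⟩
  intro r hr
  rw [intervalIntegral.integral_of_le hr, ← MeasureTheory.integral_indicator measurableSet_Ioc]
  congr 1
  funext τ
  by_cases hmem : τ ∈ Set.Ioc 0 r
  · rw [Set.indicator_of_mem hmem, hΦ,
      Set.indicator_of_mem (show (r, τ) ∈ D from ⟨hmem.1, hmem.2⟩)]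
    have e1 : (∫ x in τ..r, lam x) = L r - L τ :=
      (intervalIntegral.integral_interval_sub_left (hlamII 0 r) (hlamII 0 τ)).symm
    have e2 : (∫ x in τ..r, mu x) = Mu r - Mu τ :=
      (intervalIntegral.integral_interval_sub_left (hmuII 0 r) (hmuII 0 τ)).symm
    rw [e1, e2, neg_sub]
  · rw [Set.indicator_of_notMem hmem, hΦ,
      Set.indicator_of_notMem (show (r, τ) ∉ D from fun hc => hmem ⟨hc.1, hc.2⟩)]


/-- `λ ↦ f_k(t; λ, μ)` and `λ ↦ ∫_0^T f_k(r; λ, μ) s(r) dr` are concave on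
the set of nonnegative piecewise constant functions on `[0, T]`. -/
theorem stmt11 (mu : ℝ → ℝ) (hmu0 : ∀ x, 0 ≤ mu x) (hmuInt : LocallyIntegrable mu)
    (k : ℕ) (hk : 1 ≤ k) (t : ℝ) (ht : 0 ≤ t) (T : ℝ) (hT : 0 < T)
    (s : ℝ → ℝ) (hs0 : ∀ x, 0 ≤ s x) (hsInt : Integrable s)
    (lam1 lam2 : ℝ → ℝ) (h1 : ∀ x, 0 ≤ lam1 x) (h2 : ∀ x, 0 ≤ lam2 x)
    (hp1 : IsPiecewiseConstOn T lam1) (hp2 : IsPiecewiseConstOn T lam2)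
    (α : ℝ) (hα : α ∈ Set.Ioo (0:ℝ) 1) :
    fk k (fun x => α * lam1 x + (1 - α) * lam2 x) mu t ≥
        α * fk k lam1 mu t + (1 - α) * fk k lam2 mu t ∧
      (∫ r in (0:ℝ)..T, fk k (fun x => α * lam1 x + (1 - α) * lam2 x) mu r * s r) ≥
        α * (∫ r in (0:ℝ)..T, fk k lam1 mu r * s r) +
          (1 - α) * (∫ r in (0:ℝ)..T, fk k lam2 mu r * s r) := by
  have hmuII : ∀ a b : ℝ, IntervalIntegrable mu volume a b := fun a b => by
    rw [intervalIntegrable_iff]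
    exact (hmuInt.integrableOn_isCompact isCompact_uIcc).mono_set Set.uIoc_subset_uIcc
  have hm1 : Measurable lam1 := pw_measurable hp1
  have hm2 : Measurable lam2 := pw_measurable hp2
  have hII1 : ∀ a b : ℝ, IntervalIntegrable lam1 volume a b := pw_intIntble hp1
  have hII2 : ∀ a b : ℝ, IntervalIntegrable lam2 volume a b := pw_intIntble hp2
  have hrc1 := pw_right_const hp1
  have hrc2 := pw_right_const hp2
  set lamc : ℝ → ℝ := fun x => α * lam1 x + (1 - α) * lam2 x with hlamc
  have hmc : Measurable lamc := (hm1.const_mul α).add (hm2.const_mul (1 - α))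
  have hc0 : ∀ x, 0 ≤ lamc x := fun x =>
    add_nonneg (mul_nonneg hα.1.le (h1 x)) (mul_nonneg (by linarith [hα.2]) (h2 x))
  have hIIc : ∀ a b : ℝ, IntervalIntegrable lamc volume a b := fun a b =>
    ((hII1 a b).const_mul α).add ((hII2 a b).const_mul (1 - α))
  have hrcc : ∀ x, ∃ ε > 0, ∀ y ∈ Set.Ico x (x + ε), lamc y = lamc x := by
    intro x
    obtain ⟨ε1, hε1, ha⟩ := hrc1 x
    obtain ⟨ε2, hε2, hb⟩ := hrc2 x
    refine ⟨min ε1 ε2, lt_min hε1 hε2, fun y hy => ?_⟩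
    rw [hlamc]
    dsimp only
    rw [ha y ⟨hy.1, lt_of_lt_of_le hy.2 (by linarith [min_le_left ε1 ε2])⟩,
      hb y ⟨hy.1, lt_of_lt_of_le hy.2 (by linarith [min_le_right ε1 ε2])⟩]
  set c : ℝ := 1 / (Nat.factorial (k - 1) : ℝ) with hcdef
  have hc : 0 < c := by
    rw [hcdef]
    positivity
  -- concavity of fk at any time r ≥ 0
  have hconc : ∀ r : ℝ, 0 ≤ r →
      α * fk k lam1 mu r + (1 - α) * fk k lam2 mu r ≤ fk k lamc mu r := by
    intro r hr
    have := core_concave hmu0 hmuII hm1 h1 hII1 hrc1 hm2 h2 hII2 hrc2 hα k hr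
    unfold fk
    rw [← hcdef]
    nlinarith [this, hc]
  constructor
  · exact hconc t ht
  -- second part
  have hbound : ∀ (lam : ℝ → ℝ), Measurable lam → (∀ x, 0 ≤ lam x) →
      (∀ a b : ℝ, IntervalIntegrable lam volume a b) →
      (∀ x, ∃ ε > 0, ∀ y ∈ Set.Ico x (x + ε), lam y = lam x) →
      ∀ r : ℝ, 0 ≤ r → |fk k lam mu r| ≤ c * uGamma k 0 := by
    intro lam hm h0 hII hrc r hr
    obtain ⟨hge, hle⟩ := core_nonneg_bound hmu0 hmuII hm h0 hII hrc k hr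
    unfold fk
    rw [← hcdef, abs_mul, abs_of_pos hc, abs_of_nonneg hge]
    have h0' : 0 ≤ uGamma k 0 := le_trans hge hle
    nlinarith
  have hint : ∀ (lam : ℝ → ℝ), Measurable lam → (∀ x, 0 ≤ lam x) →
      (∀ a b : ℝ, IntervalIntegrable lam volume a b) →
      (∀ x, ∃ ε > 0, ∀ y ∈ Set.Ico x (x + ε), lam y = lam x) →
      IntervalIntegrable (fun r => fk k lam mu r * s r) volume 0 T := by
    intro lam hm h0 hII hrc
    obtain ⟨g, hgmeas, hgeq⟩ := core_meas hmuII hm hII k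
    rw [intervalIntegrable_iff_integrableOn_Ioc_of_le hT.le]
    have haesm : AEStronglyMeasurable (fun r => fk k lam mu r * s r)
        (volume.restrict (Set.Ioc 0 T)) := by
      apply AEStronglyMeasurable.congr
        (((hgmeas.const_mul c).aestronglyMeasurable.mul hsInt.1.restrict))
      have : ∀ᵐ r ∂(volume.restrict (Set.Ioc 0 T)),
          ((fun x => c * g x) * s) r = fk k lam mu r * s r := by
        rw [MeasureTheory.ae_restrict_iff' measurableSet_Ioc]
        apply Filter.Eventually.of_forall
        intro r hr
        simp only [Pi.mul_apply]
        unfold fk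
        rw [← hcdef, hgeq r hr.1.le]
      exact this
    apply ((hsInt.const_mul (c * uGamma k 0)).integrableOn).mono' haesm
    rw [MeasureTheory.ae_restrict_iff' measurableSet_Ioc]
    apply Filter.Eventually.of_forall
    intro r hr
    rw [Real.norm_eq_abs, abs_mul, abs_of_nonneg (hs0 r)]
    exact mul_le_mul_of_nonneg_right (hbound lam hm h0 hII hrc r hr.1.le) (hs0 r)
  have hI1 := hint lam1 hm1 h1 hII1 hrc1
  have hI2 := hint lam2 hm2 h2 hII2 hrc2
  have hIc := hint lamc hmc hc0 hIIc hrcc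
  have hIadd : IntervalIntegrable
      (fun r => α * (fk k lam1 mu r * s r) + (1 - α) * (fk k lam2 mu r * s r)) volume 0 T :=
    (hI1.const_mul α).add (hI2.const_mul (1 - α))
  have hmono := intervalIntegral.integral_mono_on hT.le hIadd hIc (fun r hr => by
    have := hconc r hr.1
    have hsr := hs0 r
    nlinarith)
  rw [intervalIntegral.integral_add (hI1.const_mul α) (hI2.const_mul (1 - α)),
    intervalIntegral.integral_const_mul, intervalIntegral.integral_const_mul] at hmono
  exact hmono
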